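/- Let M be a closed Riemannian manifold and take ζ = 0. Then (A,B) is a cone Yang–Mills solution if and only if A is a Yang–Mills connection (d_A^* F_A = 0) and B is covariantly constant (d_A B = 0). -/
import Mathlib


open scoped RealInnerProductSpace

/-- **cone Yang–Mills solutions with `ζ = 0` on a closed manifold.**

Abstract formulation: `Ω0, Ω1, Ω2` model `Ω⁰(M, Ad P)`, `Ω¹(M, Ad P)`, `Ω²(M, Ad P)`
with their `L²` inner products over a closed Riemannian manifold `M`; `dA0 = d_A` is
the covariant derivative on sections with formal adjoint `dA0s = d_A^*` (adjointness,
with no boundary terms, encodes closedness of `M`), `dA1s = d_A^*` on two-forms,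
`bk B η = [B, η]`, and `FA = F_A` is the curvature of `A`.  We take `ζ = 0`, i.e.
`zw = 0` (wedging with ζ) and `zs = 0` (its adjoint `ζ^*`).

Then `(A, B)` satisfies the cone Yang–Mills equations
`d_A^*(F_A + ζB) + [B, d_A B] = 0` and `ζ^*(F_A + ζB) + d_A^* d_A B = 0`
if and only if `A` is a Yang–Mills connection (`d_A^* F_A = 0`) and `B` is covariantly
constant (`d_A B = 0`). -/
theorem cone_yang_mills_zeta_eq_zero
    {Ω0 Ω1 Ω2 : Type*}
    [NormedAddCommGroup Ω0] [InnerProductSpace ℝ Ω0]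
    [NormedAddCommGroup Ω1] [InnerProductSpace ℝ Ω1]
    [AddCommGroup Ω2] [Module ℝ Ω2]
    (dA0 : Ω0 →ₗ[ℝ] Ω1)            -- d_A on sections
    (dA0s : Ω1 →ₗ[ℝ] Ω0)           -- d_A^* on one-forms
    (hadj : ∀ (ξ : Ω0) (y : Ω1), ⟪dA0 ξ, y⟫ = ⟪ξ, dA0s y⟫)
    (dA1s : Ω2 →ₗ[ℝ] Ω1)           -- d_A^* on two-forms
    (zw : Ω0 →ₗ[ℝ] Ω2) (zs : Ω2 →ₗ[ℝ] Ω0)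
    (hzw : zw = 0) (hzs : zs = 0)   -- ζ = 0
    (bk : Ω0 →ₗ[ℝ] Ω1 →ₗ[ℝ] Ω1)    -- bracket [·, ·] : Ω⁰ × Ω¹ → Ω¹
    (FA : Ω2) (B : Ω0) :
    (dA1s (FA + zw B) + bk B (dA0 B) = 0 ∧ zs (FA + zw B) + dA0s (dA0 B) = 0)
      ↔ (dA1s FA = 0 ∧ dA0 B = 0) := by
  subst hzw hzs
  simp only [LinearMap.zero_apply, add_zero, zero_add]
  constructor
  · rintro ⟨h1, h2⟩
    have hB : dA0 B = 0 := by
      have : ⟪dA0 B, dA0 B⟫ = 0 := by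
        rw [hadj, h2, inner_zero_right]
      exact inner_self_eq_zero.mp this
    refine ⟨?_, hB⟩
    simpa [hB] using h1
  · rintro ⟨h1, h2⟩
    simp [h1, h2]
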